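/- Let χ be a continuous semiflow on a metric space, (N₁, N₂) a pair of closed sets satisfying the index pair conditions (IP1)–(IP3), and define λ(x) := ∫₀^{T(x)} f(x χ s) ds, where T(x) := sup{t : x χ [0,t] ⊂ N₁ \ N₂} and f : N₁ → [0,1] is continuous with f = 0 on N₂ and f = 1 on cl(N₁ \ N₂^{-T}) for a fixed T > 0 with N₂^{-T} a neighbourhood of N₂ in N₁. Then T(x) − T ≤ λ(x) ≤ T(x) for all x ∈ N₁ (with the convention ∞ − T = ∞). -/

import Mathlib

open Set MeasureTheory
open scoped ENNReal

theorem stmt15 {X : Type*} [MetricSpace X] [MeasurableSpace X]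
    (χ : ℝ → X → X)
    (hcont : Continuous fun p : ℝ × X => χ p.1 p.2)
    (hzero : ∀ z, χ 0 z = z)
    (hsemi : ∀ s t : ℝ, 0 ≤ s → 0 ≤ t → ∀ z, χ s (χ t z) = χ (s + t) z)
    (N₁ N₂ : Set X) (hsub : N₂ ⊆ N₁) (h₁ : IsClosed N₁) (h₂ : IsClosed N₂)
    -- (IP2), (IP3)
    (hIP2 : ∀ x ∈ N₁, ∀ t : ℝ, 0 ≤ t → χ t x ∉ N₁ → ∃ s ∈ Icc (0:ℝ) t, χ s x ∈ N₂)
    (hIP3 : ∀ x ∈ N₂, ∀ t : ℝ, 0 ≤ t → χ t x ∉ N₂ → ∃ s ∈ Icc (0:ℝ) t, χ s x ∉ N₁)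
    -- the exit time T
    (T : X → ℝ≥0∞)
    (hT : ∀ x ∈ N₁, T x = sSup {t : ℝ≥0∞ |
      ∀ s : ℝ, 0 ≤ s → ENNReal.ofReal s ≤ t → χ s x ∈ N₁ \ N₂})
    -- the fixed time Tc > 0 such that N₂^{-Tc} is a neighbourhood of N₂ in N₁
    (Tc : ℝ) (hTc : 0 < Tc)
    (hnbhd : ∀ x (hx : x ∈ N₂), {y : N₁ | ∃ s ∈ Icc (0:ℝ) Tc, χ s (y : X) ∈ N₂} ∈
      nhds (⟨x, hsub hx⟩ : N₁))
    -- the Urysohn function f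
    (f : X → ℝ) (hfcont : ContinuousOn f N₁)
    (hf01 : ∀ x ∈ N₁, f x ∈ Icc (0:ℝ) 1)
    (hf0 : ∀ x ∈ N₂, f x = 0)
    (hf1 : ∀ x ∈ closure (N₁ \ {y ∈ N₁ | ∃ s ∈ Icc (0:ℝ) Tc, χ s y ∈ N₂}), f x = 1)
    -- λ(x) = ∫₀^{T(x)} f(x χ s) ds
    (lam : X → ℝ≥0∞)
    (hlam : ∀ x ∈ N₁, lam x =
      ∫⁻ s in {s : ℝ | 0 ≤ s ∧ ENNReal.ofReal s < T x}, ENNReal.ofReal (f (χ s x))) :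
    ∀ x ∈ N₁, T x - ENNReal.ofReal Tc ≤ lam x ∧ lam x ≤ T x := by

  intro x hx
  have hTx : T x = sSup {t : ℝ≥0∞ |
      ∀ s : ℝ, 0 ≤ s → ENNReal.ofReal s ≤ t → χ s x ∈ N₁ \ N₂} := hT x hx
  have key : ∀ s : ℝ, 0 ≤ s → ENNReal.ofReal s < T x → χ s x ∈ N₁ \ N₂ := by
    intro s hs hlt
    rw [hTx] at hlt
    obtain ⟨t, htS, hlt'⟩ := lt_sSup_iff.mp hlt
    exact htS s hs hlt'.le
  have hfone : ∀ s : ℝ, 0 ≤ s → ENNReal.ofReal (s + Tc) < T x → f (χ s x) = 1 := by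
    intro s hs hlt
    apply hf1
    apply subset_closure
    refine ⟨(key s hs (lt_of_le_of_lt (ENNReal.ofReal_le_ofReal (by linarith)) hlt)).1, ?_⟩
    rintro ⟨-, r, ⟨hr0, hrTc⟩, hrN₂⟩
    rw [hsemi r s hr0 hs] at hrN₂
    exact (key (r + s) (by linarith)
      (lt_of_le_of_lt (ENNReal.ofReal_le_ofReal (by linarith)) hlt)).2 hrN₂
  rw [hlam x hx]
  rcases eq_or_ne (T x) ⊤ with htop | hfin
  · constructor
    · have hA : {s : ℝ | 0 ≤ s ∧ ENNReal.ofReal s < T x} = Ici 0 := by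
        ext s; simp [htop]
      rw [hA]
      have heq : ∫⁻ s in Ici (0:ℝ), ENNReal.ofReal (f (χ s x)) = ∫⁻ _ in Ici (0:ℝ), 1 :=
        setLIntegral_congr_fun measurableSet_Ici (fun s hs => by
          beta_reduce; rw [hfone s hs (by simp [htop]), ENNReal.ofReal_one])
      rw [heq, setLIntegral_one, Real.volume_Ici]
      exact le_top
    · rw [htop]; exact le_top
  · have hA : {s : ℝ | 0 ≤ s ∧ ENNReal.ofReal s < T x} = Ico 0 (T x).toReal := by
      ext s
      simp only [mem_setOf_eq, mem_Ico]
      exact and_congr_right fun hs => ENNReal.ofReal_lt_iff_lt_toReal hs hfin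
    rw [hA]
    constructor
    · calc T x - ENNReal.ofReal Tc = ENNReal.ofReal ((T x).toReal - Tc) := by
            rw [ENNReal.ofReal_sub _ hTc.le, ENNReal.ofReal_toReal hfin]
        _ = volume (Ico (0:ℝ) ((T x).toReal - Tc)) := by rw [Real.volume_Ico, sub_zero]
        _ = ∫⁻ _ in Ico (0:ℝ) ((T x).toReal - Tc), 1 := (setLIntegral_one _).symm
        _ = ∫⁻ s in Ico (0:ℝ) ((T x).toReal - Tc), ENNReal.ofReal (f (χ s x)) := by
            refine (setLIntegral_congr_fun measurableSet_Ico (fun s hs => ?_))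
            beta_reduce
            rw [hfone s hs.1 ((ENNReal.ofReal_lt_iff_lt_toReal (by linarith [hs.1]) hfin).2
              (by linarith [hs.2])), ENNReal.ofReal_one]
        _ ≤ ∫⁻ s in Ico (0:ℝ) (T x).toReal, ENNReal.ofReal (f (χ s x)) :=
            lintegral_mono' (Measure.restrict_mono
              (Ico_subset_Ico_right (by linarith)) le_rfl) le_rfl
    · calc ∫⁻ s in Ico (0:ℝ) (T x).toReal, ENNReal.ofReal (f (χ s x))
          ≤ ∫⁻ _ in Ico (0:ℝ) (T x).toReal, 1 := by
            refine lintegral_mono_ae ((ae_restrict_iff' measurableSet_Ico).2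
              (ae_of_all _ fun s hs => ?_))
            have hmem := key s hs.1 ((ENNReal.ofReal_lt_iff_lt_toReal hs.1 hfin).2 hs.2)
            exact ENNReal.ofReal_le_one.2 (hf01 _ hmem.1).2
        _ = volume (Ico (0:ℝ) (T x).toReal) := setLIntegral_one _
        _ = ENNReal.ofReal (T x).toReal := by rw [Real.volume_Ico, sub_zero]
        _ = T x := ENNReal.ofReal_toReal hfin
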